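/- Let S₁ < S₂ be symmetric n×n matrices (S₂ − S₁ positive definite), and let 𝒮ᵢ = {(h, Sᵢh) : h ∈ ℝⁿ} be the corresponding Lagrangian graphs in ℝ²ⁿ. If S is a symmetric matrix with S₁ ≤ S ≤ S₂ and v = (x, Sx), then writing v = v₁ + v₂ with vᵢ ∈ 𝒮ᵢ, one has ω(v₁, v₂) = xᵀ(S₂ − S)(S₂ − S₁)⁻¹(S − S₁)x ≥ 0. -/

import Mathlib

open Matrix

/-- The standard symplectic form on ℝ²ⁿ = ℝⁿ × ℝⁿ: ω((x,p),(x',p')) = p'·x − p·x'. -/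
def omegaForm {n : ℕ} (u v : (Fin n → ℝ) × (Fin n → ℝ)) : ℝ :=
  v.2 ⬝ᵥ u.1 - u.2 ⬝ᵥ v.1

private lemma mvdot {n : ℕ} (M : Matrix (Fin n) (Fin n) ℝ) (v w : Fin n → ℝ) :
    (M *ᵥ v) ⬝ᵥ w = v ⬝ᵥ (Mᵀ *ᵥ w) := by
  rw [dotProduct_mulVec, vecMul_transpose, dotProduct_comm]

theorem stmt7 (n : ℕ) (S₁ S₂ S : Matrix (Fin n) (Fin n) ℝ)
    (hS₁ : S₁.IsSymm) (hS₂ : S₂.IsSymm) (hS : S.IsSymm)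
    (hU : (S₂ - S₁).PosDef)
    (h₁ : (S - S₁).PosSemidef) (h₂ : (S₂ - S).PosSemidef)
    (x x₁ x₂ : Fin n → ℝ)
    (hdecomp : ((x, S *ᵥ x) : (Fin n → ℝ) × (Fin n → ℝ))
      = (x₁, S₁ *ᵥ x₁) + (x₂, S₂ *ᵥ x₂)) :
    omegaForm (x₁, S₁ *ᵥ x₁) (x₂, S₂ *ᵥ x₂)
      = x ⬝ᵥ ((S₂ - S) * (S₂ - S₁)⁻¹ * (S - S₁)) *ᵥ x ∧
    0 ≤ x ⬝ᵥ ((S₂ - S) * (S₂ - S₁)⁻¹ * (S - S₁)) *ᵥ x := by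
  have hx : x = x₁ + x₂ := congrArg Prod.fst hdecomp
  have hp : S *ᵥ x = S₁ *ᵥ x₁ + S₂ *ᵥ x₂ := congrArg Prod.snd hdecomp
  set A := S₂ - S with hA
  set B := S - S₁ with hB
  set C := S₂ - S₁ with hC
  have hAs : Aᵀ = A := hS₂.sub hS
  have hBs : Bᵀ = B := hS.sub hS₁
  have hCs : Cᵀ = C := hS₂.sub hS₁
  have hCinvs : C⁻¹ᵀ = C⁻¹ := by rw [transpose_nonsing_inv, hCs]
  have hCunit : IsUnit C.det := isUnit_iff_ne_zero.mpr hU.det_pos.ne'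
  have hBA : A *ᵥ x₂ = B *ᵥ x₁ := by
    have h := hp
    rw [hx, mulVec_add] at h
    funext i
    have h' := congrFun h i
    simp only [Pi.add_apply, hA, hB, sub_mulVec, Pi.sub_apply] at h' ⊢
    linarith
  have hCAB : C = A + B := by rw [hA, hB, hC]; abel
  have hCx₂ : C *ᵥ x₂ = B *ᵥ x := by
    rw [hCAB, add_mulVec, hBA, ← mulVec_add, ← hx]
  have hCx₁ : C *ᵥ x₁ = A *ᵥ x := by
    rw [hCAB, add_mulVec, ← hBA, ← mulVec_add, ← hx]
  have hx₂ : x₂ = C⁻¹ *ᵥ (B *ᵥ x) := by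
    rw [← hCx₂, mulVec_mulVec, nonsing_inv_mul C hCunit, one_mulVec]
  have homega : omegaForm (x₁, S₁ *ᵥ x₁) (x₂, S₂ *ᵥ x₂) = x₂ ⬝ᵥ (A *ᵥ x) := by
    show (S₂ *ᵥ x₂) ⬝ᵥ x₁ - (S₁ *ᵥ x₁) ⬝ᵥ x₂ = _
    rw [mvdot, hS₂.eq, dotProduct_comm (S₁ *ᵥ x₁) x₂, ← hCx₁, hCAB, add_mulVec,
      dotProduct_add, hA, hB, sub_mulVec, sub_mulVec, dotProduct_sub, dotProduct_sub]
    ring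
  have key : x₂ ⬝ᵥ (A *ᵥ x) = x ⬝ᵥ (A * C⁻¹ * B) *ᵥ x := by
    rw [hx₂, mvdot, hCinvs, mulVec_mulVec, mvdot]
    -- goal: x ⬝ᵥ Bᵀ *ᵥ (C⁻¹ * A) *ᵥ x = x ⬝ᵥ (A * C⁻¹ * B) *ᵥ x
    rw [hBs, mulVec_mulVec]
    have hT : B * (C⁻¹ * A) = (A * C⁻¹ * B)ᵀ := by
      rw [transpose_mul, transpose_mul, hBs, hCinvs, hAs]
    rw [hT, ← mvdot, dotProduct_comm]
  have hnn : 0 ≤ x₂ ⬝ᵥ (A *ᵥ x) := by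
    have e1 : x₂ ⬝ᵥ (A *ᵥ x) = x₂ ⬝ᵥ (A *ᵥ x₁) + x₂ ⬝ᵥ (A *ᵥ x₂) := by
      rw [hx, mulVec_add, dotProduct_add]
    have e2 : x₂ ⬝ᵥ (A *ᵥ x₁) = x₁ ⬝ᵥ (B *ᵥ x₁) := by
      rw [dotProduct_comm, mvdot, hAs, hBA]
    have p1 : 0 ≤ x₁ ⬝ᵥ (B *ᵥ x₁) := h₁.dotProduct_mulVec_nonneg x₁
    have p2 : 0 ≤ x₂ ⬝ᵥ (A *ᵥ x₂) := h₂.dotProduct_mulVec_nonneg x₂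
    rw [e1, e2]; linarith
  exact ⟨homega.trans key, key ▸ hnn⟩
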